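/- The cubic Q(z) = 2σc²z²(h₂ − z) − 4(Δh − λz)² has a double root if (h₂, Δh) lies either on the line Δh = 0 with h₂ = σ(4λ² − t²)/(2c²) for some t (double root at z = 0), or on the parametrized curve h₂ = σ(t−2λ)(3t−2λ)/(2c²), Δh = σ(t−2λ)t²/(2c²) (double root at z = σt(t−2λ)/c², with the third root z = −σt²/(2c²)). Specifically, for the latter parametrization, Q(z) factors as −2σc²(z − r)²(z + σt²/(2c²)) with r = σt(t−2λ)/c². -/

import Mathlib

noncomputable section

/-- Q(z) = 2σc²z²(h₂ − z) − 4(Δh − λz)². -/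
def Q (σ c lam h₂ Δh : ℝ) (z : ℝ) : ℝ :=
  2 * σ * c ^ 2 * z ^ 2 * (h₂ - z) - 4 * (Δh - lam * z) ^ 2

/-- Double roots of Q: on the line Δh = 0, h₂ = σ(4λ²−t²)/(2c²) there is a double root
at z = 0; on the curve h₂ = σ(t−2λ)(3t−2λ)/(2c²), Δh = σ(t−2λ)t²/(2c²) the cubic factors
as Q(z) = −2σc²(z − r)²(z + σt²/(2c²)) with r = σt(t−2λ)/c². -/
theorem stmt9 (σ c lam t : ℝ) (hσ : σ = 1 ∨ σ = -1) (hc : 0 < c) :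
    (Q σ c lam (σ * (4 * lam ^ 2 - t ^ 2) / (2 * c ^ 2)) 0 0 = 0 ∧
      deriv (Q σ c lam (σ * (4 * lam ^ 2 - t ^ 2) / (2 * c ^ 2)) 0) 0 = 0) ∧
    (∀ z : ℝ,
      Q σ c lam (σ * (t - 2 * lam) * (3 * t - 2 * lam) / (2 * c ^ 2))
          (σ * (t - 2 * lam) * t ^ 2 / (2 * c ^ 2)) z
        = -2 * σ * c ^ 2 * (z - σ * t * (t - 2 * lam) / c ^ 2) ^ 2
            * (z + σ * t ^ 2 / (2 * c ^ 2))) := by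
  have hc2 : (c : ℝ) ^ 2 ≠ 0 := pow_ne_zero _ hc.ne'
  have hσ2 : σ ^ 2 = 1 := by rcases hσ with h | h <;> simp [h]
  refine ⟨⟨by simp [Q], ?_⟩, ?_⟩
  · have : deriv (Q σ c lam (σ * (4 * lam ^ 2 - t ^ 2) / (2 * c ^ 2)) 0) = fun z =>
        2 * σ * c ^ 2 * (2 * z) * (σ * (4 * lam ^ 2 - t ^ 2) / (2 * c ^ 2) - z)
          + 2 * σ * c ^ 2 * z ^ 2 * (-1) - 4 * (2 * (0 - lam * z) * (-lam)) := by
      funext z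
      unfold Q
      have h1 : HasDerivAt (fun z : ℝ => 2 * σ * c ^ 2 * z ^ 2 *
          (σ * (4 * lam ^ 2 - t ^ 2) / (2 * c ^ 2) - z) - 4 * ((0:ℝ) - lam * z) ^ 2)
          (2 * σ * c ^ 2 * (2 * z) * (σ * (4 * lam ^ 2 - t ^ 2) / (2 * c ^ 2) - z)
            + 2 * σ * c ^ 2 * z ^ 2 * (-1) - 4 * (2 * ((0:ℝ) - lam * z) * (-lam))) z := by
        have ha : HasDerivAt (fun z : ℝ => 2 * σ * c ^ 2 * z ^ 2) (2 * σ * c ^ 2 * (2 * z)) z := by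
          have := (hasDerivAt_pow 2 z).const_mul (2 * σ * c ^ 2)
          simpa using this
        have hb : HasDerivAt (fun z : ℝ => σ * (4 * lam ^ 2 - t ^ 2) / (2 * c ^ 2) - z) (-1) z := by
          simpa using (hasDerivAt_id z).const_sub (σ * (4 * lam ^ 2 - t ^ 2) / (2 * c ^ 2))
        have hd : HasDerivAt (fun z : ℝ => (0:ℝ) - lam * z) (-lam) z := by
          simpa using ((hasDerivAt_id z).const_mul lam).const_sub 0
        have he : HasDerivAt (fun z : ℝ => ((0:ℝ) - lam * z) ^ 2) (2 * ((0:ℝ) - lam * z) * (-lam)) z := by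
          simpa [mul_comm, mul_assoc] using (hd.fun_pow 2)
        exact (ha.mul hb).sub (he.const_mul 4)
      exact h1.deriv
    rw [this]; ring
  · intro z
    unfold Q
    rcases hσ with rfl | rfl <;> field_simp <;> ring
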